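/- Let K be a field and F_1,...,F_s ∈ K[X_1,...,X_r] polynomials with homogenizations F_1^h,...,F_s^h ∈ K[X_0,...,X_r]. If F ∈ K[X_1,...,X_r] belongs to the radical of the ideal (F_1,...,F_s), then X_0 · F^h belongs to the radical of the ideal (F_1^h,...,F_s^h). Consequently, if the ideal (F_1^h,...,F_s^h) is radical, then F^h lies in it after specializing X_0 ↦ 1, so F ∈ (F_1,...,F_s); that is, if (F_1^h,...,F_s^h) is radical then (F_1,...,F_s) is radical. -/

import Mathlib

open MvPolynomial

/-- The affine zero set in `ι → K` of a set of multivariate polynomials. -/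
def aZeros {K : Type*} [Field K] {ι : Type*} (S : Set (MvPolynomial ι K)) : Set (ι → K) :=
  {x | ∀ f ∈ S, MvPolynomial.eval x f = 0}

/-- A subset of affine space is algebraic (Zariski closed) if it is a zero set. -/
def IsAlg {K : Type*} [Field K] {ι : Type*} (V : Set (ι → K)) : Prop :=
  ∃ S : Set (MvPolynomial ι K), V = aZeros S

/-- Irreducibility of a subset of affine space with respect to algebraic covers. -/
def IsIrr {K : Type*} [Field K] {ι : Type*} (V : Set (ι → K)) : Prop :=
  V.Nonempty ∧ ∀ V₁ V₂ : Set (ι → K), IsAlg V₁ → IsAlg V₂ → V ⊆ V₁ ∪ V₂ → V ⊆ V₁ ∨ V ⊆ V₂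

/-- Dimension: the supremum of lengths of strictly increasing chains of irreducible
algebraic subsets contained in `V`. -/
noncomputable def aDim {K : Type*} [Field K] {ι : Type*} (V : Set (ι → K)) : ℕ∞ :=
  ⨆ (n : ℕ) (_ : ∃ C : Fin (n + 1) → Set (ι → K),
      StrictMono C ∧ ∀ i, IsAlg (C i) ∧ IsIrr (C i) ∧ C i ⊆ V), (n : ℕ∞)

/-- `C` is an irreducible component of `V`: a maximal irreducible algebraic subset. -/
def IsComponent {K : Type*} [Field K] {ι : Type*} (V C : Set (ι → K)) : Prop :=
  IsAlg C ∧ IsIrr C ∧ C ⊆ V ∧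
    ∀ C' : Set (ι → K), IsAlg C' → IsIrr C' → C' ⊆ V → C ⊆ C' → C' = C

/-- `V` is nonempty of pure dimension `n`. -/
def PureDim {K : Type*} [Field K] {ι : Type*} (V : Set (ι → K)) (n : ℕ) : Prop :=
  V.Nonempty ∧ ∀ C, IsComponent V C → aDim C = (n : ℕ∞)

/-- Homogenization of `F ∈ K[X_1,…,X_r]` with homogenizing variable `X_0`
(index `0` of `Fin (r+1)`; variable `i` of `Fin r` becomes index `i.succ`). -/
noncomputable def homog {K : Type*} [Field K] {r : ℕ} (F : MvPolynomial (Fin r) K) :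
    MvPolynomial (Fin (r + 1)) K :=
  ∑ m ∈ F.support,
    MvPolynomial.monomial
      (Finsupp.mapDomain Fin.succ m + Finsupp.single 0 (F.totalDegree - m.sum fun _ e => e))
      (MvPolynomial.coeff m F)

section Aux

variable {K : Type*} [Field K] {r : ℕ}

/-- exponent map for homogenization at degree `d` -/
noncomputable def tau (r d : ℕ) (m : Fin r →₀ ℕ) : Fin (r+1) →₀ ℕ :=
  Finsupp.mapDomain Fin.succ m + Finsupp.single 0 (d - m.sum fun _ e => e)

lemma tau_apply_succ (d : ℕ) (m : Fin r →₀ ℕ) (j : Fin r) :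
    tau r d m j.succ = m j := by
  simp [tau, Finsupp.mapDomain_apply (Fin.succ_injective r),
    Finsupp.single_apply, Fin.succ_ne_zero j, (Fin.succ_ne_zero j).symm]

lemma tau_inj (d : ℕ) : Function.Injective (tau r d) := by
  intro m m' h
  ext j
  rw [← tau_apply_succ d m j, ← tau_apply_succ d m' j, h]

lemma tau_degree (d : ℕ) (m : Fin r →₀ ℕ) (h : (m.sum fun _ e => e) ≤ d) :
    ((tau r d m).sum fun _ e => e) = d := by
  rw [tau, Finsupp.sum_add_index' (fun _ => rfl) (fun _ _ _ => rfl),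
    Finsupp.sum_mapDomain_index_inj (Fin.succ_injective r), Finsupp.sum_single_index rfl]
  omega

/-- degree-`d` homogenization as `Finsupp.mapDomain` -/
noncomputable def Ld (d : ℕ) (P : MvPolynomial (Fin r) K) : MvPolynomial (Fin (r+1)) K :=
  AddMonoidAlgebra.mapDomain (tau r d) P

lemma Ld_add (d : ℕ) (P Q : MvPolynomial (Fin r) K) : Ld d (P + Q) = Ld d P + Ld d Q :=
  AddMonoidAlgebra.mapDomain_add _ _ _

lemma Ld_zero (d : ℕ) : Ld d (0 : MvPolynomial (Fin r) K) = 0 :=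
  AddMonoidAlgebra.mapDomain_zero _

lemma Ld_monomial (d : ℕ) (m : Fin r →₀ ℕ) (c : K) :
    Ld d (monomial m c) = monomial (tau r d m) c := by
  rw [Ld, ← single_eq_monomial, ← single_eq_monomial]
  exact AddMonoidAlgebra.mapDomain_single

lemma homog_eq_Ld (P : MvPolynomial (Fin r) K) : homog P = Ld P.totalDegree P := by
  rw [homog]
  have h := (map_sum (AddMonoidHom.mk' (Ld P.totalDegree) (Ld_add _) : MvPolynomial _ K →+ _)
    (fun m => monomial m (coeff m P)) P.support).trans
    (Finset.sum_congr rfl fun m _ => Ld_monomial P.totalDegree m _)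
  rw [support_sum_monomial_coeff] at h
  exact h.symm

lemma Ld_eq_sum (d : ℕ) (P : MvPolynomial (Fin r) K) :
    Ld d P = ∑ m ∈ P.support, monomial (tau r d m) (coeff m P) := by
  conv_lhs => rw [← support_sum_monomial_coeff P]
  exact (map_sum (AddMonoidHom.mk' (Ld d) (Ld_add d) : MvPolynomial _ K →+ _) _ _).trans
    (Finset.sum_congr rfl fun m _ => Ld_monomial d m _)

lemma homog_zero : homog (0 : MvPolynomial (Fin r) K) = 0 := by
  rw [homog_eq_Ld, Ld_zero]

lemma zero_not_range_succ : (0 : Fin (r+1)) ∉ Set.range Fin.succ := by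
  rintro ⟨i, hi⟩; exact Fin.succ_ne_zero i hi

lemma tau_apply_zero (d : ℕ) (m : Fin r →₀ ℕ) :
    tau r d m 0 = d - m.sum fun _ e => e := by
  simp [tau, Finsupp.mapDomain_notin_range _ _ zero_not_range_succ]

lemma tau_shift (d e : ℕ) (m : Fin r →₀ ℕ) (h : (m.sum fun _ e => e) ≤ d) :
    Finsupp.single 0 e + tau r d m = tau r (d + e) m := by
  ext j
  refine Fin.cases ?_ (fun i => ?_) j
  · simp only [Finsupp.add_apply, Finsupp.single_eq_same, tau_apply_zero]
    omega
  · simp [tau_apply_succ, Finsupp.single_apply, (Fin.succ_ne_zero i).symm]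

lemma X_pow_mul_Ld (d e : ℕ) (P : MvPolynomial (Fin r) K) (h : P.totalDegree ≤ d) :
    (X 0 : MvPolynomial (Fin (r+1)) K) ^ e * Ld d P = Ld (d + e) P := by
  rw [Ld_eq_sum, Ld_eq_sum, Finset.mul_sum]
  refine Finset.sum_congr rfl fun m hm => ?_
  have hmd : (m.sum fun _ e => e) ≤ d := le_trans (MvPolynomial.le_totalDegree hm) h
  rw [X_pow_eq_monomial, monomial_mul, one_mul, tau_shift d e m hmd]

/-- dehomogenization: `X_0 ↦ 1`, `X_{i.succ} ↦ X_i`. -/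
noncomputable def dehom : MvPolynomial (Fin (r+1)) K →+* MvPolynomial (Fin r) K :=
  eval₂Hom MvPolynomial.C (Fin.cases 1 fun i => X i)

lemma dehom_monomial_tau (d : ℕ) (m : Fin r →₀ ℕ) (c : K) :
    dehom (monomial (tau r d m) c) = monomial m c := by
  rw [dehom, eval₂Hom_monomial, tau,
    Finsupp.prod_add_index' (fun _ => pow_zero _) (fun _ _ _ => pow_add _ _ _),
    Finsupp.prod_mapDomain_index_inj (Fin.succ_injective r)]
  rw [Finsupp.prod_single_index]
  · simp only [Fin.cases_zero, Fin.cases_succ, one_pow, mul_one]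
    rw [monomial_eq]
  · exact pow_zero _

lemma Ld_sum {ι : Type*} (d : ℕ) (s : Finset ι) (f : ι → MvPolynomial (Fin r) K) :
    Ld d (∑ i ∈ s, f i) = ∑ i ∈ s, Ld d (f i) := by
  classical
  induction s using Finset.induction_on with
  | empty => simp [Ld_zero]
  | insert _ _ h ih => rw [Finset.sum_insert h, Finset.sum_insert h, Ld_add, ih]

lemma dehom_Ld (d : ℕ) (P : MvPolynomial (Fin r) K) : dehom (Ld d P) = P := by
  rw [Ld_eq_sum, map_sum]
  simp_rw [dehom_monomial_tau]
  exact support_sum_monomial_coeff P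

lemma dehom_homog (P : MvPolynomial (Fin r) K) : dehom (homog P) = P := by
  rw [homog_eq_Ld, dehom_Ld]

lemma homog_isHomogeneous (P : MvPolynomial (Fin r) K) :
    (homog P).IsHomogeneous P.totalDegree := by
  rw [homog_eq_Ld, Ld_eq_sum]
  refine MvPolynomial.IsHomogeneous.sum _ _ _ fun m hm => isHomogeneous_monomial _ ?_
  show ((tau r P.totalDegree m).sum fun _ e => e) = P.totalDegree
  exact tau_degree _ _ (le_totalDegree hm)

/-- the tail of an exponent vector -/
noncomputable def tail (n : Fin (r+1) →₀ ℕ) : Fin r →₀ ℕ :=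
  Finsupp.equivFunOnFinite.symm fun j => n j.succ

lemma tail_apply (n : Fin (r+1) →₀ ℕ) (j : Fin r) : tail n j = n j.succ := rfl

lemma tau_tail (d : ℕ) (n : Fin (r+1) →₀ ℕ) (h : (n.sum fun _ e => e) = d) :
    tau r d (tail n) = n := by
  have hs : ((tail n).sum fun _ e => e) = ∑ i : Fin r, n i.succ := by
    rw [Finsupp.sum_fintype _ _ fun _ => rfl]
    exact Finset.sum_congr rfl fun i _ => tail_apply n i
  have hn : (n.sum fun _ e => e) = n 0 + ∑ i : Fin r, n i.succ := by
    rw [Finsupp.sum_fintype _ _ fun _ => rfl, Fin.sum_univ_succ]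
  ext j
  refine Fin.cases ?_ (fun i => ?_) j
  · rw [tau_apply_zero]; omega
  · rw [tau_apply_succ, tail_apply]

lemma Ld_dehom {d : ℕ} {H : MvPolynomial (Fin (r+1)) K} (hH : H.IsHomogeneous d) :
    Ld d (dehom H) = H := by
  conv_rhs => rw [← support_sum_monomial_coeff H]
  conv_lhs => rw [← support_sum_monomial_coeff H]
  rw [map_sum, Ld_sum]
  refine Finset.sum_congr rfl fun n hn => ?_
  have hd : (n.sum fun _ e => e) = d := by
    by_contra hne
    exact mem_support_iff.mp hn (hH.coeff_eq_zero hne)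
  rw [← tau_tail d n hd, dehom_monomial_tau, Ld_monomial]

lemma eq_X_pow_mul_homog {d : ℕ} {H : MvPolynomial (Fin (r+1)) K} (hH : H.IsHomogeneous d)
    (hle : (dehom H).totalDegree ≤ d) :
    H = X 0 ^ (d - (dehom H).totalDegree) * homog (dehom H) := by
  rw [homog_eq_Ld, X_pow_mul_Ld _ _ _ le_rfl, Nat.add_sub_cancel' hle, Ld_dehom hH]

lemma homog_pow (G : MvPolynomial (Fin r) K) (n : ℕ) :
    ∃ k, (homog G) ^ n = X 0 ^ k * homog (G ^ n) := by
  have hH : ((homog G) ^ n).IsHomogeneous (G.totalDegree * n) := (homog_isHomogeneous G).pow n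
  have hd : dehom ((homog G) ^ n) = G ^ n := by rw [map_pow, dehom_homog]
  have hle : (dehom ((homog G) ^ n)).totalDegree ≤ G.totalDegree * n := by
    rw [hd]; exact (totalDegree_pow G n).trans_eq (mul_comm _ _)
  exact ⟨_, by rw [eq_X_pow_mul_homog hH hle, hd]⟩

lemma homog_mul' (a x : MvPolynomial (Fin r) K) :
    ∃ k, homog a * homog x = X 0 ^ k * homog (a * x) := by
  have hH : (homog a * homog x).IsHomogeneous (a.totalDegree + x.totalDegree) :=
    (homog_isHomogeneous a).mul (homog_isHomogeneous x)
  have hd : dehom (homog a * homog x) = a * x := by rw [map_mul, dehom_homog, dehom_homog]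
  have hle : (dehom (homog a * homog x)).totalDegree ≤ a.totalDegree + x.totalDegree := by
    rw [hd]; exact totalDegree_mul a x
  exact ⟨_, by rw [eq_X_pow_mul_homog hH hle, hd]⟩

lemma span_homog {s : ℕ} (F : Fin s → MvPolynomial (Fin r) K) (P : MvPolynomial (Fin r) K)
    (hP : P ∈ Ideal.span (Set.range F)) :
    ∃ N : ℕ, X 0 ^ N * homog P ∈ Ideal.span (Set.range fun i => homog (F i)) := by
  refine Submodule.span_induction ?_ ?_ ?_ ?_ hP
  · rintro x ⟨i, rfl⟩
    exact ⟨0, by rw [pow_zero, one_mul]; exact Ideal.subset_span ⟨i, rfl⟩⟩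
  · exact ⟨0, by rw [homog_zero, mul_zero]; exact Ideal.zero_mem _⟩
  · rintro x y hx hy ⟨N, hN⟩ ⟨M, hM⟩
    set D := max x.totalDegree y.totalDegree with hD
    have key : X 0 ^ (D - (x + y).totalDegree) * homog (x + y) =
        X 0 ^ (D - x.totalDegree) * homog x + X 0 ^ (D - y.totalDegree) * homog y := by
      rw [homog_eq_Ld, homog_eq_Ld, homog_eq_Ld,
        X_pow_mul_Ld _ _ _ le_rfl, X_pow_mul_Ld _ _ _ le_rfl, X_pow_mul_Ld _ _ _ le_rfl,
        Nat.add_sub_cancel' ((totalDegree_add x y).trans le_rfl),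
        Nat.add_sub_cancel' (le_max_left _ _), Nat.add_sub_cancel' (le_max_right _ _), Ld_add]
    refine ⟨N + M + (D - (x + y).totalDegree), ?_⟩
    have heq : X 0 ^ (N + M + (D - (x + y).totalDegree)) * homog (x + y) =
        X 0 ^ (M + (D - x.totalDegree)) * (X 0 ^ N * homog x) +
        X 0 ^ (N + (D - y.totalDegree)) * (X 0 ^ M * homog y) := by
      rw [pow_add, mul_assoc, key]; ring
    rw [heq]
    exact Ideal.add_mem _ (Ideal.mul_mem_left _ _ hN) (Ideal.mul_mem_left _ _ hM)
  · rintro a x hx ⟨N, hN⟩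
    obtain ⟨k, hk⟩ := homog_mul' a x
    refine ⟨N + k, ?_⟩
    have heq : X 0 ^ (N + k) * homog (a • x) = homog a * (X 0 ^ N * homog x) := by
      rw [smul_eq_mul]; linear_combination (X 0 : MvPolynomial (Fin (r+1)) K) ^ N * hk.symm
    rw [heq]
    exact Ideal.mul_mem_left _ _ hN

end Aux

/-- If `F` lies in the radical of `(F_1,…,F_s)` then `X_0 · F^h` lies in
the radical of `(F_1^h,…,F_s^h)`; consequently if `(F_1^h,…,F_s^h)` is radical then so is
`(F_1,…,F_s)`. -/
theorem stmt6 {K : Type*} [Field K] (r s : ℕ) (F : Fin s → MvPolynomial (Fin r) K) :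
    (∀ G : MvPolynomial (Fin r) K, G ∈ (Ideal.span (Set.range F)).radical →
      MvPolynomial.X 0 * homog G ∈
        (Ideal.span (Set.range fun i => homog (F i))).radical) ∧
    ((Ideal.span (Set.range fun i => homog (F i))).IsRadical →
      (Ideal.span (Set.range F)).IsRadical) := by
  have part1 : ∀ G : MvPolynomial (Fin r) K, G ∈ (Ideal.span (Set.range F)).radical →
      X 0 * homog G ∈ (Ideal.span (Set.range fun i => homog (F i))).radical := by
    intro G hG
    obtain ⟨n, hn⟩ := Ideal.mem_radical_iff.mp hG
    obtain ⟨N, hN⟩ := span_homog F (G ^ n) hn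
    obtain ⟨k, hk⟩ := homog_pow G n
    refine Ideal.mem_radical_iff.mpr ⟨N + n, ?_⟩
    have heq : (X 0 * homog G) ^ (N + n) =
        (X 0 ^ (n + k) * homog G ^ N) * (X 0 ^ N * homog (G ^ n)) := by
      rw [mul_pow, pow_add (homog G), hk]; ring
    rw [heq]
    exact Ideal.mul_mem_left _ _ hN
  refine ⟨part1, fun hJ => ?_⟩
  intro G hG
  have h2 : X 0 * homog G ∈ Ideal.span (Set.range fun i => homog (F i)) := hJ (part1 G hG)
  have h3 : dehom (X 0 * homog G) ∈
      Ideal.map (dehom : MvPolynomial (Fin (r+1)) K →+* MvPolynomial (Fin r) K)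
        (Ideal.span (Set.range fun i => homog (F i))) := Ideal.mem_map_of_mem _ h2
  rw [Ideal.map_span] at h3
  have himg : (dehom : MvPolynomial (Fin (r+1)) K →+* MvPolynomial (Fin r) K) ''
      (Set.range fun i => homog (F i)) = Set.range F := by
    rw [← Set.range_comp]
    congr 1; funext j; exact dehom_homog (F j)
  rw [himg] at h3
  have h4 : dehom (X 0 * homog G) = G := by
    have hX : dehom (X 0 : MvPolynomial (Fin (r+1)) K) = 1 := by
      rw [dehom, eval₂Hom_X']
      exact Fin.cases_zero
    rw [map_mul, dehom_homog, hX, one_mul]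
  rwa [h4] at h3
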